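/- Let C be an F[x]-submodule of V = R_1 × ⋯ × R_ℓ generated by elements g_1, …, g_ρ ∈ V. Choose polynomial representatives and form the (ρ + ℓ) × ℓ matrix G over F[x] whose first ρ rows are the representative tuples of g_1, …, g_ρ and whose last ℓ rows form the diagonal matrix diag(x^{m_1} − λ_1, …, x^{m_ℓ} − λ_ℓ). Let 𝔡_ℓ(G) be the ℓ-th determinantal divisor of G, i.e., the monic gcd in F[x] of the determinants of all ℓ × ℓ submatrices of G obtained by selecting ℓ of its rows. Then the dimension of C as an F-vector space equals n − deg(𝔡_ℓ(G)). -/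

import Mathlib

/-!
STATEMENT 4 (Theorem `dimension`): for a ρ-generator multi-twisted code C with lifted
generator matrix G (of size (ρ+ℓ)×ℓ over F[x], last ℓ rows = diag(x^{mᵢ} − λᵢ)),
dim_F C = n − deg 𝔡_ℓ(G), where 𝔡_ℓ(G) is the monic gcd of the determinants of all
ℓ×ℓ row-submatrices of G. The monic gcd is characterized by: d is monic, d divides
every ℓ×ℓ minor, and every common divisor of the minors divides d.
-/

open Polynomial

open Polynomial Matrix

lemma myfinrank_quot {F : Type*} [Field F] (p : F[X]) (hp : p ≠ 0) :
    Module.finrank F (F[X] ⧸ Ideal.span {p}) = p.natDegree := by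
  have h := (AdjoinRoot.powerBasis hp).finrank
  simp [AdjoinRoot.powerBasis] at h
  exact h

lemma myfin_quot {F : Type*} [Field F] (p : F[X]) (hp : p ≠ 0) :
    Module.Finite F (F[X] ⧸ Ideal.span {p}) :=
  Module.Finite.of_basis (AdjoinRoot.powerBasis hp).basis

lemma mydvd_det_mul {R : Type*} [CommRing R] {k K : Type*} [Fintype k] [DecidableEq k]
    [Fintype K]
    (e : R) (Gm : Matrix K k R)
    (he : ∀ s : k → K, e ∣ (Gm.submatrix s id).det)
    (B : Matrix k K R) : e ∣ (B * Gm).det := by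
  have h1 : (B * Gm) = Matrix.of (fun i => ∑ r, B i r • Gm r) := by
    ext i j; simp [Matrix.mul_apply]
  rw [h1]
  have h2 : (Matrix.of (fun i => ∑ r, B i r • Gm r)).det
      = (Matrix.detRowAlternating (R := R) (n := k)).toMultilinearMap
        (fun i => ∑ r, B i r • Gm r) := rfl
  rw [h2]
  rw [(Matrix.detRowAlternating (R := R) (n := k)).toMultilinearMap.map_sum]
  apply Finset.dvd_sum
  intro s _
  rw [MultilinearMap.map_smul_univ]
  have : (Matrix.detRowAlternating (R := R) (n := k)).toMultilinearMap (fun i => Gm (s i))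
      = (Gm.submatrix s id).det := rfl
  rw [this]
  exact Dvd.dvd.mul_left (he s) _

open Polynomial

set_option maxHeartbeats 1000000


theorem stmt4 (F : Type*) [Field F] [Fintype F]
    (ℓ : ℕ) (hℓ : 1 ≤ ℓ)
    (m : Fin ℓ → ℕ) (hm : ∀ i, 1 ≤ m i)
    (lam : Fin ℓ → F) (hlam : ∀ i, lam i ≠ 0)
    (f : Fin ℓ → Polynomial F) (hf : ∀ i, f i = X ^ (m i) - C (lam i))
    (ρ : ℕ) (gen : Fin ρ → Π i, Polynomial F ⧸ Ideal.span {f i})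
    (Ccode : Submodule (Polynomial F) (Π i, Polynomial F ⧸ Ideal.span {f i}))
    (hC : Ccode = Submodule.span (Polynomial F) (Set.range gen))
    -- the lifted generator matrix G : first ρ rows are representatives of the
    -- generators, last ℓ rows are diag(x^{mᵢ} − λᵢ)
    (G : Matrix (Fin ρ ⊕ Fin ℓ) (Fin ℓ) (Polynomial F))
    (hGgen : ∀ (j : Fin ρ) (i : Fin ℓ),
      Ideal.Quotient.mk (Ideal.span {f i}) (G (Sum.inl j) i) = gen j i)
    (hGdiag : ∀ (i' i : Fin ℓ), G (Sum.inr i') i = if i' = i then f i else 0)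
    -- d = 𝔡_ℓ(G), the monic gcd of all ℓ×ℓ minors of G
    (d : Polynomial F)
    (hdmonic : d.Monic)
    (hddvd : ∀ s : Fin ℓ → (Fin ρ ⊕ Fin ℓ), d ∣ (G.submatrix s id).det)
    (hdgcd : ∀ e : Polynomial F,
      (∀ s : Fin ℓ → (Fin ρ ⊕ Fin ℓ), e ∣ (G.submatrix s id).det) → e ∣ d) :
    Module.finrank F (Submodule.restrictScalars F Ccode) = (∑ i, m i) - d.natDegree := by
  classical
  -- basic facts about the f i
  have hfmonic : ∀ i, (f i).Monic := by
    intro i; rw [hf i]; exact monic_X_pow_sub_C _ (Nat.one_le_iff_ne_zero.mp (hm i))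
  have hfne : ∀ i, f i ≠ 0 := fun i => (hfmonic i).ne_zero
  have hfdeg : ∀ i, (f i).natDegree = m i := by
    intro i; rw [hf i]; exact natDegree_X_pow_sub_C
  -- the projection π
  set π : (Fin ℓ → Polynomial F) →ₗ[Polynomial F] (Π i, Polynomial F ⧸ Ideal.span {f i}) :=
    LinearMap.pi (fun i => (Ideal.span {f i}).mkQ.comp (LinearMap.proj i)) with hπ
  have hπapp : ∀ (v : Fin ℓ → Polynomial F) (i : Fin ℓ),
      π v i = Ideal.Quotient.mk (Ideal.span {f i}) (v i) := fun v i => rfl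
  have hπsurj : Function.Surjective π := by
    intro w
    choose v hv using fun i => Ideal.Quotient.mk_surjective (I := Ideal.span {f i}) (w i)
    exact ⟨v, funext fun i => hv i⟩
  -- the row space M
  set M : Submodule (Polynomial F) (Fin ℓ → Polynomial F) :=
    Submodule.span (Polynomial F) (Set.range (fun r => G r)) with hM
  have hrowM : ∀ r, G r ∈ M := fun r => Submodule.subset_span ⟨r, rfl⟩
  have hdiagrow : ∀ i : Fin ℓ, G (Sum.inr i) = f i • (Pi.single i 1 : Fin ℓ → Polynomial F) := by
    intro i; funext j
    rw [hGdiag i j]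
    by_cases h : i = j
    · subst h; simp
    · simp [h, Pi.single_apply, Ne.symm h]
  have hπdiag : ∀ i : Fin ℓ, π (G (Sum.inr i)) = 0 := by
    intro i; funext j
    rw [hπapp]
    show Ideal.Quotient.mk _ _ = (0 : Polynomial F ⧸ Ideal.span {f j})
    rw [hGdiag]
    split
    · exact Ideal.Quotient.eq_zero_iff_mem.mpr (Ideal.subset_span rfl)
    · simp
  have hπgen : ∀ j : Fin ρ, π (G (Sum.inl j)) = gen j := by
    intro j; funext i; rw [hπapp]; exact hGgen j i
  -- map π M = Ccode
  have hmapM : M.map π = Ccode := by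
    apply le_antisymm
    · rw [Submodule.map_le_iff_le_comap, hM, Submodule.span_le]
      rintro _ ⟨r, rfl⟩
      rcases r with j | i
      · simp only [Submodule.mem_comap, SetLike.mem_coe]
        rw [hπgen j, hC]
        exact Submodule.subset_span ⟨j, rfl⟩
      · simp only [Submodule.mem_comap, SetLike.mem_coe]
        rw [hπdiag i]
        exact Submodule.zero_mem _
    · rw [hC, Submodule.span_le]
      rintro _ ⟨j, rfl⟩
      exact ⟨G (Sum.inl j), hrowM _, hπgen j⟩
  -- ker π ≤ M
  have hker : LinearMap.ker π ≤ M := by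
    intro v hv
    rw [LinearMap.mem_ker] at hv
    have hvi : ∀ i, v i ∈ Ideal.span {f i} := by
      intro i
      have : π v i = 0 := by rw [hv]; rfl
      rw [hπapp] at this
      exact Ideal.Quotient.eq_zero_iff_mem.mp this
    choose c hc using fun i => Ideal.mem_span_singleton'.mp (hvi i)
    have : v = ∑ i, c i • G (Sum.inr i) := by
      funext j
      rw [Finset.sum_apply]
      simp only [Pi.smul_apply, hGdiag, smul_eq_mul]
      rw [Finset.sum_eq_single j]
      · simp [hc j]
      · intro i _ hij; simp [hij]
      · intro h; exact absurd (Finset.mem_univ j) h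
    rw [this]
    exact Submodule.sum_mem _ fun i _ => Submodule.smul_mem _ _ (hrowM _)
  -- quotient equivalence
  have hle : M ≤ Ccode.comap π := by
    intro v hv
    rw [Submodule.mem_comap, ← hmapM]
    exact Submodule.mem_map_of_mem hv
  set φ : ((Fin ℓ → Polynomial F) ⧸ M) →ₗ[Polynomial F]
      ((Π i, Polynomial F ⧸ Ideal.span {f i}) ⧸ Ccode) :=
    Submodule.mapQ M Ccode π hle with hφ
  have hφbij : Function.Bijective φ := by
    constructor
    · intro x y hxy
      obtain ⟨v, rfl⟩ := Submodule.Quotient.mk_surjective M x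
      obtain ⟨w, rfl⟩ := Submodule.Quotient.mk_surjective M y
      rw [hφ, Submodule.mapQ_apply, Submodule.mapQ_apply] at hxy
      rw [Submodule.Quotient.eq] at hxy ⊢
      have : π (v - w) ∈ Ccode := by rw [map_sub]; exact hxy
      rw [← hmapM] at this
      obtain ⟨u, huM, hu⟩ := this
      have : (v - w) - u ∈ LinearMap.ker π := by
        rw [LinearMap.mem_ker, map_sub, hu, sub_self]
      have h2 : (v - w) - u ∈ M := hker this
      have := M.add_mem h2 huM
      simpa using this
    · intro y
      obtain ⟨w, rfl⟩ := Submodule.Quotient.mk_surjective Ccode y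
      obtain ⟨v, rfl⟩ := hπsurj w
      exact ⟨Submodule.Quotient.mk v, by rw [hφ, Submodule.mapQ_apply]⟩
  -- Smith normal form of M
  obtain ⟨n', snf⟩ := M.smithNormalForm (Pi.basisFun (Polynomial F) (Fin ℓ))
  -- snf.f is surjective
  have hsmul : ∀ (i : Fin ℓ) (v : Fin ℓ → Polynomial F),
      (∏ j, f j) • (Pi.single i (v i) : Fin ℓ → Polynomial F) ∈ M := by
    intro i v
    have h1 : f i • (Pi.single i 1 : Fin ℓ → Polynomial F) ∈ M := by
      rw [← hdiagrow]; exact hrowM _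
    have : (∏ j, f j) • (Pi.single i (v i) : Fin ℓ → Polynomial F)
        = ((∏ j ∈ Finset.univ.erase i, f j) * v i) •
          (f i • (Pi.single i 1 : Fin ℓ → Polynomial F)) := by
      rw [smul_smul]
      funext k
      simp only [Pi.smul_apply, Pi.single_apply, smul_eq_mul]
      by_cases h : k = i
      · subst h
        rw [← Finset.mul_prod_erase _ _ (Finset.mem_univ k)]
        norm_num
        ring
      · simp [h]
    rw [this]
    exact M.smul_mem _ h1
  have hprodne : (∏ j, f j) ≠ 0 := Finset.prod_ne_zero_iff.mpr (fun j _ => hfne j)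
  have hqsmul : ∀ v : Fin ℓ → Polynomial F, (∏ j, f j) • v ∈ M := by
    intro v
    have : (∏ j, f j) • v
        = ∑ i, (∏ j, f j) • (Pi.single i (v i) : Fin ℓ → Polynomial F) := by
      rw [← Finset.smul_sum]
      congr 1
      funext k
      rw [Finset.sum_apply]
      rw [Finset.sum_eq_single k (fun i _ hik => by simp [Pi.single_apply, Ne.symm hik])
        (fun h => absurd (Finset.mem_univ k) h)]
      simp
    rw [this]
    exact Submodule.sum_mem _ fun i _ => hsmul i v
  have hfsurj : Function.Surjective snf.f := by
    intro i
    by_contra hi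
    push_neg at hi
    have hnm : i ∉ Set.range snf.f := by rintro ⟨j, rfl⟩; exact hi j rfl
    have hmem : (∏ j, f j) • snf.bM i ∈ M := hqsmul _
    have := snf.repr_eq_zero_of_notMem_range (⟨_, hmem⟩ : M) hnm
    rw [show ((⟨_, hmem⟩ : M) : Fin ℓ → Polynomial F) = (∏ j, f j) • snf.bM i from rfl] at this
    rw [_root_.map_smul] at this
    simp only [Module.Basis.repr_self, Finsupp.smul_single, smul_eq_mul, mul_one,
      Finsupp.single_eq_same] at this
    exact hprodne this
  have σbij : Function.Bijective snf.f := ⟨snf.f.injective, hfsurj⟩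
  set σ : Fin n' ≃ Fin ℓ := Equiv.ofBijective snf.f σbij with hσ
  -- reindexed basis of M and diagonal entries
  set a' : Fin ℓ → Polynomial F := fun i => snf.a (σ.symm i) with ha'
  set bN : Module.Basis (Fin ℓ) (Polynomial F) M := snf.bN.reindex σ with hbN
  have hbNa : ∀ j : Fin ℓ, (bN j : Fin ℓ → Polynomial F) = a' j • snf.bM j := by
    intro j
    rw [hbN, Module.Basis.reindex_apply, snf.snf]
    congr 1
    exact congrArg _ (σ.apply_symm_apply j)
  have ha'ne : ∀ j, a' j ≠ 0 := by
    intro j hj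
    have : (bN j : Fin ℓ → Polynomial F) = 0 := by rw [hbNa, hj, zero_smul]
    exact Module.Basis.ne_zero bN j (Subtype.ext this)
  -- image of M under the coordinate map of snf.bM
  set p : Fin ℓ → Submodule (Polynomial F) (Polynomial F) :=
    fun j => Ideal.span {a' j} with hp
  have hreprM : ∀ (v : Fin ℓ → Polynomial F) (hv : v ∈ M) (j : Fin ℓ),
      snf.bM.repr v j = a' j * snf.bN.repr (⟨v, hv⟩ : M) (σ.symm j) := by
    intro v hv j
    have h1 : snf.f (σ.symm j) = j := σ.apply_symm_apply j
    have h2 := snf.repr_apply_embedding_eq_repr_smul (m := (⟨v, hv⟩ : M)) (i := σ.symm j)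
    rw [h1] at h2
    rw [show ((⟨v, hv⟩ : M) : Fin ℓ → Polynomial F) = v from rfl] at h2
    rw [h2, _root_.map_smul, Finsupp.smul_apply, smul_eq_mul]
  have hmapM2 : M.map (snf.bM.equivFun :
        (Fin ℓ → Polynomial F) →ₗ[Polynomial F] (Fin ℓ → Polynomial F))
      = Submodule.pi Set.univ p := by
    apply le_antisymm
    · rintro _ ⟨v, hv, rfl⟩
      intro j _
      rw [hp]
      show snf.bM.equivFun v j ∈ Ideal.span {a' j}
      rw [Module.Basis.equivFun_apply, hreprM v hv j]
      exact Ideal.mul_mem_right _ _ (Ideal.subset_span rfl)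
    · intro v hv
      have hvj : ∀ j, ∃ c, v j = c * a' j := by
        intro j
        have := hv j (Set.mem_univ j)
        rw [hp] at this
        obtain ⟨c, hc⟩ := Ideal.mem_span_singleton'.mp this
        exact ⟨c, hc.symm⟩
      choose c hc using hvj
      refine ⟨∑ j, v j • snf.bM j, ?_, ?_⟩
      · have : (∑ j, v j • snf.bM j) = ∑ j, c j • ((bN j : Fin ℓ → Polynomial F)) := by
          refine Finset.sum_congr rfl fun j _ => ?_
          rw [hbNa j, hc j, smul_smul]
        rw [this]
        exact Submodule.sum_mem _ fun j _ => Submodule.smul_mem _ _ (bN j).2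
      · rw [show (snf.bM.equivFun : (Fin ℓ → Polynomial F) →ₗ[Polynomial F]
            (Fin ℓ → Polynomial F)) (∑ j, v j • snf.bM j)
            = snf.bM.equivFun (∑ j, v j • snf.bM j) from rfl]
        rw [← Module.Basis.equivFun_symm_apply, LinearEquiv.apply_symm_apply]
  -- quotient equivalences
  have e2 : ((Fin ℓ → Polynomial F) ⧸ M) ≃ₗ[Polynomial F]
      ((Fin ℓ → Polynomial F) ⧸ Submodule.pi Set.univ p) :=
    Submodule.Quotient.equiv M _ snf.bM.equivFun hmapM2
  have e3 : ((Fin ℓ → Polynomial F) ⧸ Submodule.pi Set.univ p) ≃ₗ[Polynomial F]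
      Π j, Polynomial F ⧸ p j := Submodule.quotientPi p
  have E : (Π j, Polynomial F ⧸ p j) ≃ₗ[Polynomial F]
      ((Π i, Polynomial F ⧸ Ideal.span {f i}) ⧸ Ccode) :=
    (e2.trans e3).symm.trans (LinearEquiv.ofBijective φ hφbij)
  -- finrank computations
  haveI : ∀ i, Module.Finite F (Polynomial F ⧸ Ideal.span {f i}) :=
    fun i => myfin_quot _ (hfne i)
  haveI : ∀ j, Module.Finite F (Polynomial F ⧸ p j) :=
    fun j => myfin_quot _ (ha'ne j)
  have hfinV : Module.finrank F (Π i, Polynomial F ⧸ Ideal.span {f i}) = ∑ i, m i := by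
    rw [Module.finrank_pi_fintype F]
    exact Finset.sum_congr rfl fun i _ => by
      rw [myfinrank_quot _ (hfne i), hfdeg i]
  have hfinQ : Module.finrank F ((Π i, Polynomial F ⧸ Ideal.span {f i}) ⧸ Ccode)
      = ∑ j, (a' j).natDegree := by
    rw [← LinearEquiv.finrank_eq (E.restrictScalars F)]
    rw [Module.finrank_pi_fintype F]
    exact Finset.sum_congr rfl fun j _ => myfinrank_quot _ (ha'ne j)
  -- Part C: d and ∏ a' are associated
  set A : Matrix (Fin ℓ) (Fin ℓ) (Polynomial F) := Matrix.of (fun j i => snf.bM j i) with hA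
  have hAdet : IsUnit A.det := by
    have h1 : A = ((Pi.basisFun (Polynomial F) (Fin ℓ)).toMatrix (fun j => snf.bM j))ᵀ := by
      ext j i
      simp [hA, Module.Basis.toMatrix_apply, Pi.basisFun_repr]
    rw [h1, Matrix.det_transpose, ← Module.Basis.det_apply]
    exact (Pi.basisFun (Polynomial F) (Fin ℓ)).isUnit_det snf.bM
  set G' : Matrix (Fin ρ ⊕ Fin ℓ) (Fin ℓ) (Polynomial F) :=
    Matrix.of (fun r j => snf.bM.repr (G r) j) with hG'
  have hGGA : G = G' * A := by
    refine Matrix.ext fun r i => ?_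
    rw [Matrix.mul_apply]
    have := snf.bM.sum_repr (G r)
    calc G r i = (∑ j, snf.bM.repr (G r) j • snf.bM j) i := by rw [this]
    _ = ∑ j, G' r j * A j i := by
        rw [Finset.sum_apply]
        exact Finset.sum_congr rfl fun j _ => rfl
  have hminor : ∀ s : Fin ℓ → (Fin ρ ⊕ Fin ℓ),
      (G.submatrix s id).det = (G'.submatrix s id).det * A.det := by
    intro s
    rw [hGGA, Matrix.submatrix_mul G' A s id id Function.bijective_id,
      Matrix.submatrix_id_id, Matrix.det_mul]
  have hd' : ∀ s : Fin ℓ → (Fin ρ ⊕ Fin ℓ), d ∣ (G'.submatrix s id).det := by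
    intro s
    have := hddvd s
    rw [hminor s] at this
    exact (hAdet.dvd_mul_right).mp this
  -- the diagonal matrix
  set D : Matrix (Fin ℓ) (Fin ℓ) (Polynomial F) := Matrix.diagonal a' with hD
  have hreprbN : ∀ j k, snf.bM.repr ((bN j : Fin ℓ → Polynomial F)) k = D j k := by
    intro j k
    rw [hbNa j, _root_.map_smul, Finsupp.smul_apply, Module.Basis.repr_self, smul_eq_mul]
    rw [hD, Matrix.diagonal_apply]
    by_cases h : j = k
    · subst h; simp
    · simp [h, Finsupp.single_apply]
  -- D = B' * G'
  have hbNmem : ∀ j, (bN j : Fin ℓ → Polynomial F) ∈ M := fun j => (bN j).2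
  have hbNspan : ∀ j, ∃ c : (Fin ρ ⊕ Fin ℓ) → Polynomial F,
      ∑ r, c r • G r = (bN j : Fin ℓ → Polynomial F) := by
    intro j
    exact (Submodule.mem_span_range_iff_exists_fun (R := Polynomial F)).mp (hbNmem j)
  choose B' hB' using hbNspan
  have hDBG : D = Matrix.of (fun j r => B' j r) * G' := by
    refine Matrix.ext fun j k => ?_
    rw [← hreprbN j k, ← hB' j, Matrix.mul_apply, map_sum, Finsupp.finset_sum_apply]
    refine Finset.sum_congr rfl fun r _ => ?_
    rw [_root_.map_smul, Finsupp.smul_apply, smul_eq_mul]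
    rfl
  have hdvdprod : d ∣ ∏ j, a' j := by
    have h1 : d ∣ D.det := by
      rw [hDBG]
      exact mydvd_det_mul d G' hd' _
    rwa [hD, Matrix.det_diagonal] at h1
  set B : Matrix (Fin ρ ⊕ Fin ℓ) (Fin ℓ) (Polynomial F) :=
    Matrix.of (fun r j => bN.repr ⟨G r, hrowM r⟩ j) with hB
  have hG'BD : G' = B * D := by
    refine Matrix.ext fun r k => ?_
    have hsum : G r = ∑ j, bN.repr ⟨G r, hrowM r⟩ j • (bN j : Fin ℓ → Polynomial F) := by
      calc G r = (M.subtype) (∑ j, bN.repr ⟨G r, hrowM r⟩ j • bN j) := by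
            rw [bN.sum_repr ⟨G r, hrowM r⟩]; rfl
      _ = ∑ j, bN.repr ⟨G r, hrowM r⟩ j • (bN j : Fin ℓ → Polynomial F) := by
            rw [map_sum]; exact Finset.sum_congr rfl fun j _ => rfl
    show snf.bM.repr (G r) k = _
    rw [Matrix.mul_apply]
    conv_lhs => rw [hsum]
    rw [map_sum, Finsupp.finset_sum_apply]
    refine Finset.sum_congr rfl fun j _ => ?_
    rw [_root_.map_smul, Finsupp.smul_apply, smul_eq_mul, hreprbN j k]
    rfl
  have hprodd : (∏ j, a' j) ∣ d := by
    apply hdgcd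
    intro s
    rw [hminor s]
    apply Dvd.dvd.mul_right
    have h2 : G'.submatrix s id = (B.submatrix s id) * D := by
      rw [hG'BD, Matrix.submatrix_mul B D s id id Function.bijective_id,
        Matrix.submatrix_id_id]
    rw [h2, Matrix.det_mul, hD, Matrix.det_diagonal]
    exact dvd_mul_left _ _
  have hprodne' : (∏ j, a' j) ≠ 0 := Finset.prod_ne_zero_iff.mpr fun j _ => ha'ne j
  have hdeg : d.natDegree = ∑ j, (a' j).natDegree := by
    have h1 : d.natDegree = (∏ j, a' j).natDegree :=
      le_antisymm (Polynomial.natDegree_le_of_dvd hdvdprod hprodne')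
        (Polynomial.natDegree_le_of_dvd hprodd hdmonic.ne_zero)
    rw [h1, Polynomial.natDegree_prod _ _ (fun j _ => ha'ne j)]
  -- final assembly
  haveI : FiniteDimensional F (Π i, Polynomial F ⧸ Ideal.span {f i}) := by
    infer_instance
  have hq := Submodule.finrank_quotient_add_finrank (Ccode.restrictScalars F)
  have hVq : Module.finrank F
      ((Π i, Polynomial F ⧸ Ideal.span {f i}) ⧸ Ccode.restrictScalars F) = d.natDegree := by
    rw [LinearEquiv.finrank_eq (Submodule.Quotient.restrictScalarsEquiv F Ccode), hfinQ, hdeg]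
  rw [hVq, hfinV] at hq
  omega
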